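/- Fix a Hermitian quaternion matrix C ∈ ℍ^{n×n}, quaternion matrices A_1, …, A_m ∈ ℍ^{n×n}, and b ∈ ℍ^m. Then the following two sets of real numbers are equal: (1) { Re(Tr(C* H)) : H ∈ ℍ^{n×n} Hermitian, H quaternion-PSD, and Tr(A_i* H) = b_i for all i }; (2) { Re(Tr(C* H_X)) : X a real symmetric positive semidefinite 4n×4n matrix with Tr(A_i* H_X) = b_i for all i }, where H_X := R_X + I_X·i + J_X·j + K_X·k is built from the blocks of X. In particular, the quaternion SDP and its economical real SDP reformulation attain the same objective values, hence have the same optimal value; moreover, from any optimal X of the real problem, H_X is an optimal solution of the quaternion problem. -/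

import Mathlib

open Matrix

/-- The quaternion matrix `H_X = R_X + I_X·i + J_X·j + K_X·k` built from the
`4 × 4` block structure of a real `4n × 4n` matrix `X`. -/
noncomputable def quatOfBlocks {n : ℕ}
    (X : Matrix (Fin 4 × Fin n) (Fin 4 × Fin n) ℝ) :
    Matrix (Fin n) (Fin n) (Quaternion ℝ) := fun k l =>
  ⟨X (0, k) (0, l) + X (1, k) (1, l) + X (2, k) (2, l) + X (3, k) (3, l),
   X (1, k) (0, l) - X (0, k) (1, l) + X (3, k) (2, l) - X (2, k) (3, l),
   X (2, k) (0, l) - X (0, k) (2, l) - X (3, k) (1, l) + X (1, k) (3, l),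
   X (3, k) (0, l) - X (0, k) (3, l) + X (2, k) (1, l) - X (1, k) (2, l)⟩

namespace QuatSDPAux

/-- The standard basis `1, i, j, k` of the quaternions. -/
noncomputable def qbasis (a : Fin 4) : Quaternion ℝ :=
  ⟨if a = 0 then 1 else 0, if a = 1 then 1 else 0,
   if a = 2 then 1 else 0, if a = 3 then 1 else 0⟩

@[simp] lemma qbasis_re (a : Fin 4) : (qbasis a).re = if a = 0 then 1 else 0 := rfl
@[simp] lemma qbasis_imI (a : Fin 4) : (qbasis a).imI = if a = 1 then 1 else 0 := rfl
@[simp] lemma qbasis_imJ (a : Fin 4) : (qbasis a).imJ = if a = 2 then 1 else 0 := rfl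
@[simp] lemma qbasis_imK (a : Fin 4) : (qbasis a).imK = if a = 3 then 1 else 0 := rfl

/-- The coordinates of a quaternion. -/
noncomputable def qcoord (c : Fin 4) (q : Quaternion ℝ) : ℝ :=
  if c = 0 then q.re else if c = 1 then q.imI else if c = 2 then q.imJ else q.imK

lemma re_sum {α : Type*} (s : Finset α) (f : α → Quaternion ℝ) :
    (∑ x ∈ s, f x).re = ∑ x ∈ s, (f x).re := by
  classical
  induction s using Finset.induction_on with
  | empty => simp; rfl
  | insert _ _ h ih => rw [Finset.sum_insert h, Finset.sum_insert h, Quaternion.re_add, ih]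

@[simp] lemma quatOfBlocks_re {n : ℕ} (X : Matrix (Fin 4 × Fin n) (Fin 4 × Fin n) ℝ)
    (k l : Fin n) : (quatOfBlocks X k l).re
      = X (0, k) (0, l) + X (1, k) (1, l) + X (2, k) (2, l) + X (3, k) (3, l) := rfl
@[simp] lemma quatOfBlocks_imI {n : ℕ} (X : Matrix (Fin 4 × Fin n) (Fin 4 × Fin n) ℝ)
    (k l : Fin n) : (quatOfBlocks X k l).imI
      = X (1, k) (0, l) - X (0, k) (1, l) + X (3, k) (2, l) - X (2, k) (3, l) := rfl
@[simp] lemma quatOfBlocks_imJ {n : ℕ} (X : Matrix (Fin 4 × Fin n) (Fin 4 × Fin n) ℝ)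
    (k l : Fin n) : (quatOfBlocks X k l).imJ
      = X (2, k) (0, l) - X (0, k) (2, l) - X (3, k) (1, l) + X (1, k) (3, l) := rfl
@[simp] lemma quatOfBlocks_imK {n : ℕ} (X : Matrix (Fin 4 × Fin n) (Fin 4 × Fin n) ℝ)
    (k l : Fin n) : (quatOfBlocks X k l).imK
      = X (3, k) (0, l) - X (0, k) (3, l) + X (2, k) (1, l) - X (1, k) (2, l) := rfl

lemma re_form (q v w : Quaternion ℝ) :
    (star v * q * w).re
      = ∑ a, ∑ b, qcoord a v * qcoord b w * (star (qbasis a) * q * qbasis b).re := by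
  simp only [Fin.sum_univ_four, qcoord]
  simp [Quaternion.re_mul, Quaternion.imI_mul, Quaternion.imJ_mul, Quaternion.imK_mul]
  ring

lemma re_form2 {n : ℕ} (X : Matrix (Fin 4 × Fin n) (Fin 4 × Fin n) ℝ)
    (k l : Fin n) (v w : Quaternion ℝ) :
    (star v * quatOfBlocks X k l * w).re
      = ∑ c, ∑ a, ∑ b,
          qcoord c (star (qbasis a) * v) * X (a, k) (b, l)
            * qcoord c (star (qbasis b) * w) := by
  simp only [Fin.sum_univ_four, qcoord]
  simp [Quaternion.re_mul, Quaternion.imI_mul, Quaternion.imJ_mul, Quaternion.imK_mul]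
  ring

lemma sum_assembly {n : ℕ} (t : Fin 4 → Fin n → Fin 4 → Fin n → ℝ) :
    ∑ k, ∑ l, ∑ a, ∑ b, t a k b l
      = ∑ p : Fin 4 × Fin n, ∑ q : Fin 4 × Fin n, t p.1 p.2 q.1 q.2 := by
  simp only [Fintype.sum_prod_type]
  calc ∑ k, ∑ l, ∑ a, ∑ b, t a k b l
      = ∑ k, ∑ a, ∑ l, ∑ b, t a k b l :=
        Finset.sum_congr rfl fun k _ => Finset.sum_comm
    _ = ∑ a, ∑ k, ∑ l, ∑ b, t a k b l := Finset.sum_comm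
    _ = ∑ a, ∑ k, ∑ b, ∑ l, t a k b l :=
        Finset.sum_congr rfl fun a _ => Finset.sum_congr rfl fun k _ => Finset.sum_comm

lemma sum_pullc {n : ℕ} (t : Fin 4 → Fin n → Fin n → ℝ) :
    ∑ k, ∑ l, ∑ c, t c k l = ∑ c, ∑ k, ∑ l, t c k l := by
  calc ∑ k, ∑ l, ∑ c, t c k l
      = ∑ k, ∑ c, ∑ l, t c k l := Finset.sum_congr rfl fun k _ => Finset.sum_comm
    _ = ∑ c, ∑ k, ∑ l, t c k l := Finset.sum_comm

lemma reconstruct {n : ℕ} (H : Matrix (Fin n) (Fin n) (Quaternion ℝ)) :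
    quatOfBlocks
      (fun p q => (star (qbasis p.1) * H p.2 q.2 * qbasis q.1).re / 4) = H := by
  ext k l <;>
  · simp [quatOfBlocks, Quaternion.re_mul, Quaternion.imI_mul,
      Quaternion.imJ_mul, Quaternion.imK_mul]
    ring

end QuatSDPAux

open QuatSDPAux

/-- The quaternion SDP and its economical real SDP reformulation attain exactly the
same set of objective values (in particular they have the same optimal value, and
from any optimal `X` of the real problem, `H_X` is optimal for the quaternion one). -/
theorem quaternion_sdp_eq_real_sdp_values {n m : ℕ}
    (C : Matrix (Fin n) (Fin n) (Quaternion ℝ)) (hC : C = Cᴴ)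
    (A : Fin m → Matrix (Fin n) (Fin n) (Quaternion ℝ))
    (b : Fin m → Quaternion ℝ) :
    {r : ℝ | ∃ H : Matrix (Fin n) (Fin n) (Quaternion ℝ),
        H = Hᴴ ∧
        (∀ v : Fin n → Quaternion ℝ, 0 ≤ (∑ k, ∑ l, star (v k) * H k l * v l).re) ∧
        (∀ i, ((A i)ᴴ * H).trace = b i) ∧
        r = ((Cᴴ * H).trace).re} =
    {r : ℝ | ∃ X : Matrix (Fin 4 × Fin n) (Fin 4 × Fin n) ℝ,
        X.PosSemidef ∧
        (∀ i, ((A i)ᴴ * quatOfBlocks X).trace = b i) ∧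
        r = ((Cᴴ * quatOfBlocks X).trace).re} := by
  ext r
  simp only [Set.mem_setOf_eq]
  constructor
  · rintro ⟨H, hH, hPSD, hTr, hObj⟩
    refine ⟨fun p q => (star (qbasis p.1) * H p.2 q.2 * qbasis q.1).re / 4, ?_, ?_, ?_⟩
    · refine PosSemidef.of_dotProduct_mulVec_nonneg ?_ ?_
      · -- Hermitian (symmetric) part
        ext p q
        change star ((fun p q => (star (qbasis p.1) * H p.2 q.2 * qbasis q.1).re / 4 :
          Matrix (Fin 4 × Fin n) (Fin 4 × Fin n) ℝ) q p) = _
        simp only [star_trivial]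
        have h1 : H q.2 p.2 = star (H p.2 q.2) := by
          conv_lhs => rw [hH]
          rw [conjTranspose_apply]
        have h2 : star (qbasis q.1) * star (H p.2 q.2) * qbasis p.1
            = star (star (qbasis p.1) * H p.2 q.2 * qbasis q.1) := by
          simp [StarMul.star_mul, mul_assoc]
        rw [h1, h2, Quaternion.re_star]
      · -- positivity
        intro x
        set v : Fin n → Quaternion ℝ :=
          fun k => ⟨x (0, k), x (1, k), x (2, k), x (3, k)⟩ with hv
        have hq : ∀ (a : Fin 4) (k : Fin n), qcoord a (v k) = x (a, k) := by
          intro a k; fin_cases a <;> rfl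
        have key : star x ⬝ᵥ
            ((fun p q => (star (qbasis p.1) * H p.2 q.2 * qbasis q.1).re / 4) *ᵥ x)
            = (∑ k, ∑ l, star (v k) * H k l * v l).re / 4 := by
          calc star x ⬝ᵥ
              ((fun p q => (star (qbasis p.1) * H p.2 q.2 * qbasis q.1).re / 4) *ᵥ x)
              = ∑ p, ∑ q, x p * ((star (qbasis p.1) * H p.2 q.2 * qbasis q.1).re / 4)
                  * x q := by
                simp [dotProduct, mulVec, Finset.mul_sum, mul_assoc]
            _ = ∑ k, ∑ l, ∑ a, ∑ b,
                  x (a, k) * ((star (qbasis a) * H k l * qbasis b).re / 4) * x (b, l) :=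
                (sum_assembly fun a k b l =>
                  x (a, k) * ((star (qbasis a) * H k l * qbasis b).re / 4) * x (b, l)).symm
            _ = ∑ k, ∑ l, (star (v k) * H k l * v l).re / 4 := by
                refine Finset.sum_congr rfl fun k _ => Finset.sum_congr rfl fun l _ => ?_
                rw [re_form (H k l) (v k) (v l), Finset.sum_div]
                refine Finset.sum_congr rfl fun a _ => ?_
                rw [Finset.sum_div]
                refine Finset.sum_congr rfl fun b _ => ?_
                rw [hq, hq]; ring
            _ = (∑ k, ∑ l, star (v k) * H k l * v l).re / 4 := by
                rw [re_sum, Finset.sum_div]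
                refine Finset.sum_congr rfl fun k _ => ?_
                rw [re_sum, Finset.sum_div]
        rw [key]
        exact div_nonneg (hPSD v) (by norm_num)
    · intro i
      rw [reconstruct H]
      exact hTr i
    · rw [reconstruct H]
      exact hObj
  · rintro ⟨X, hX, hTr, hObj⟩
    have hsym : ∀ p q, X p q = X q p := by
      intro p q
      conv_rhs => rw [← hX.1]
      simp [conjTranspose_apply]
    refine ⟨quatOfBlocks X, ?_, ?_, hTr, hObj⟩
    · -- Hermitian
      ext k l
      · simp only [conjTranspose_apply, Quaternion.re_star, quatOfBlocks_re]
        rw [hsym (0, l) (0, k), hsym (1, l) (1, k), hsym (2, l) (2, k), hsym (3, l) (3, k)]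
      · simp only [conjTranspose_apply, Quaternion.imI_star, quatOfBlocks_imI]
        rw [hsym (1, l) (0, k), hsym (0, l) (1, k), hsym (3, l) (2, k), hsym (2, l) (3, k)]
        ring
      · simp only [conjTranspose_apply, Quaternion.imJ_star, quatOfBlocks_imJ]
        rw [hsym (2, l) (0, k), hsym (0, l) (2, k), hsym (3, l) (1, k), hsym (1, l) (3, k)]
        ring
      · simp only [conjTranspose_apply, Quaternion.imK_star, quatOfBlocks_imK]
        rw [hsym (3, l) (0, k), hsym (0, l) (3, k), hsym (2, l) (1, k), hsym (1, l) (2, k)]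
        ring
    · -- positivity
      intro v
      have key : (∑ k, ∑ l, star (v k) * quatOfBlocks X k l * v l).re
          = ∑ c, star (fun p : Fin 4 × Fin n => qcoord c (star (qbasis p.1) * v p.2)) ⬝ᵥ
              (X *ᵥ fun p : Fin 4 × Fin n => qcoord c (star (qbasis p.1) * v p.2)) := by
        calc (∑ k, ∑ l, star (v k) * quatOfBlocks X k l * v l).re
            = ∑ k, ∑ l, (star (v k) * quatOfBlocks X k l * v l).re := by
              rw [re_sum]
              exact Finset.sum_congr rfl fun k _ => re_sum _ _
          _ = ∑ k, ∑ l, ∑ c, ∑ a, ∑ b,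
                qcoord c (star (qbasis a) * v k) * X (a, k) (b, l)
                  * qcoord c (star (qbasis b) * v l) :=
              Finset.sum_congr rfl fun k _ => Finset.sum_congr rfl fun l _ =>
                re_form2 X k l (v k) (v l)
          _ = ∑ c, ∑ k, ∑ l, ∑ a, ∑ b,
                qcoord c (star (qbasis a) * v k) * X (a, k) (b, l)
                  * qcoord c (star (qbasis b) * v l) :=
              sum_pullc _
          _ = ∑ c, ∑ p : Fin 4 × Fin n, ∑ q : Fin 4 × Fin n,
                qcoord c (star (qbasis p.1) * v p.2) * X p q
                  * qcoord c (star (qbasis q.1) * v q.2) :=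
              Finset.sum_congr rfl fun c _ =>
                sum_assembly fun a k b l =>
                  qcoord c (star (qbasis a) * v k) * X (a, k) (b, l)
                    * qcoord c (star (qbasis b) * v l)
          _ = ∑ c, star (fun p : Fin 4 × Fin n => qcoord c (star (qbasis p.1) * v p.2)) ⬝ᵥ
              (X *ᵥ fun p : Fin 4 × Fin n => qcoord c (star (qbasis p.1) * v p.2)) := by
              refine Finset.sum_congr rfl fun c _ => ?_
              simp [dotProduct, mulVec, Finset.mul_sum, mul_assoc]
      rw [key]
      exact Finset.sum_nonneg fun c _ => hX.dotProduct_mulVec_nonneg _
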